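/- Let s,t > 0, let Θ ∈ L¹(0,∞) with θ = ∫_0^∞ Θ, and suppose t > θs^p and s < θt^q. Let (u,v) be the local positive solution of the Lane-Emden Cauchy problem with u(0)=s, v(0)=2t, and define R_I = sup{r : (u(τ),v(τ)) ∈ (0,s)×(t,2t) for all τ ∈ (0,r)}. Then R_I < ∞ and u(R_I) = 0 (with v(R_I) ≥ t); in particular the initial datum (s,2t) belongs to the set A of data whose solution's u-component vanishes first. -/

import Mathlib

open Filter MeasureTheory Set

lemma theta_pos (n : ℕ) (ψ : ℝ → ℝ)
    (hψpos : ∀ r > (0:ℝ), 0 < ψ r) (hψcont : ContinuousOn ψ (Ici 0)) :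
    ∀ σ > (0:ℝ), 0 < (∫ s in (0:ℝ)..σ, ψ s ^ (n-1)) / ψ σ ^ (n-1) := by
  intro σ hσ
  apply div_pos _ (pow_pos (hψpos σ hσ) _)
  apply intervalIntegral.intervalIntegral_pos_of_pos_on
  · apply ContinuousOn.intervalIntegrable
    apply ContinuousOn.pow
    apply hψcont.mono
    rw [uIcc_of_le hσ.le]
    exact Icc_subset_Ici_self
  · exact fun x hx => pow_pos (hψpos x hx.1) _
  · exact hσ

lemma theta_nonneg (n : ℕ) (ψ : ℝ → ℝ)
    (hψpos : ∀ r > (0:ℝ), 0 < ψ r) (hψcont : ContinuousOn ψ (Ici 0)) :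
    ∀ σ ≥ (0:ℝ), 0 ≤ (∫ s in (0:ℝ)..σ, ψ s ^ (n-1)) / ψ σ ^ (n-1) := by
  intro σ hσ
  rcases eq_or_lt_of_le hσ with h | h
  · simp [← h]
  · exact (theta_pos n ψ hψpos hψcont σ h).le

lemma theta_intInt (n : ℕ) (ψ : ℝ → ℝ)
    (hΘint : IntegrableOn
      (fun r => (∫ s in (0:ℝ)..r, ψ s ^ (n-1)) / ψ r ^ (n-1)) (Ioi (0:ℝ)))
    {R : ℝ} (hR : 0 ≤ R) :
    IntervalIntegrable (fun r => (∫ s in (0:ℝ)..r, ψ s ^ (n-1)) / ψ r ^ (n-1)) volume 0 R :=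
  (intervalIntegrable_iff_integrableOn_Ioc_of_le hR).2 (hΘint.mono_set Ioc_subset_Ioi_self)

lemma theta_int_pos (n : ℕ) (ψ : ℝ → ℝ)
    (hψpos : ∀ r > (0:ℝ), 0 < ψ r) (hψcont : ContinuousOn ψ (Ici 0))
    (hΘint : IntegrableOn
      (fun r => (∫ s in (0:ℝ)..r, ψ s ^ (n-1)) / ψ r ^ (n-1)) (Ioi (0:ℝ)))
    {R : ℝ} (hR : 0 < R) :
    0 < ∫ r in (0:ℝ)..R, (∫ s in (0:ℝ)..r, ψ s ^ (n-1)) / ψ r ^ (n-1) :=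
  intervalIntegral.intervalIntegral_pos_of_pos_on (theta_intInt n ψ hΘint hR.le)
    (fun x hx => theta_pos n ψ hψpos hψcont x hx.1) hR

lemma theta_int_le (n : ℕ) (ψ : ℝ → ℝ)
    (hψpos : ∀ r > (0:ℝ), 0 < ψ r) (hψcont : ContinuousOn ψ (Ici 0))
    (hΘint : IntegrableOn
      (fun r => (∫ s in (0:ℝ)..r, ψ s ^ (n-1)) / ψ r ^ (n-1)) (Ioi (0:ℝ)))
    {R : ℝ} (hR : 0 ≤ R) :
    (∫ r in (0:ℝ)..R, (∫ s in (0:ℝ)..r, ψ s ^ (n-1)) / ψ r ^ (n-1))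
      ≤ ∫ r in Ioi (0:ℝ), (∫ s in (0:ℝ)..r, ψ s ^ (n-1)) / ψ r ^ (n-1) := by
  rw [intervalIntegral.integral_of_le hR]
  apply setIntegral_mono_set hΘint
  · exact (ae_restrict_iff' measurableSet_Ioi).2
      (ae_of_all _ fun x hx => theta_nonneg n ψ hψpos hψcont x (le_of_lt hx))
  · exact HasSubset.Subset.eventuallyLE Ioc_subset_Ioi_self

lemma aux_bound (n : ℕ) (ψ : ℝ → ℝ) (hψ0 : ψ 0 = 0)
    (hψpos : ∀ r > (0:ℝ), 0 < ψ r) (hψcont : ContinuousOn ψ (Ici 0))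
    (hΘint : IntegrableOn
      (fun r => (∫ s in (0:ℝ)..r, ψ s ^ (n-1)) / ψ r ^ (n-1)) (Ioi (0:ℝ)))
    (w : ℝ → ℝ) (hw : Continuous w)
    {R : ℝ} (hR : 0 < R) {c C : ℝ} (hc : 0 ≤ c)
    (hcw : ∀ τ ∈ Icc (0:ℝ) R, c ≤ w τ) (hwC : ∀ τ ∈ Icc (0:ℝ) R, w τ ≤ C) :
    c * (∫ σ in (0:ℝ)..R, (∫ s in (0:ℝ)..σ, ψ s ^ (n-1)) / ψ σ ^ (n-1))
        ≤ (∫ σ in (0:ℝ)..R, (∫ τ in (0:ℝ)..σ, w τ * ψ τ ^ (n-1)) / ψ σ ^ (n-1)) ∧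
      (∫ σ in (0:ℝ)..R, (∫ τ in (0:ℝ)..σ, w τ * ψ τ ^ (n-1)) / ψ σ ^ (n-1))
        ≤ C * (∫ σ in (0:ℝ)..R, (∫ s in (0:ℝ)..σ, ψ s ^ (n-1)) / ψ σ ^ (n-1)) := by
  set Θ : ℝ → ℝ := fun r => (∫ s in (0:ℝ)..r, ψ s ^ (n-1)) / ψ r ^ (n-1) with hΘdef
  set g : ℝ → ℝ := fun σ => (∫ τ in (0:ℝ)..σ, w τ * ψ τ ^ (n-1)) / ψ σ ^ (n-1) with hgdef
  have hψnn : ∀ τ ∈ Ici (0:ℝ), 0 ≤ ψ τ := by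
    intro τ hτ
    rcases eq_or_lt_of_le (mem_Ici.1 hτ) with h | h
    · rw [← h, hψ0]
    · exact (hψpos τ h).le
  have hψpowcont : ContinuousOn (fun τ => ψ τ ^ (n-1)) (Ici (0:ℝ)) := hψcont.pow _
  have key : ∀ σ ∈ Icc (0:ℝ) R, c * Θ σ ≤ g σ ∧ g σ ≤ C * Θ σ := by
    intro σ hσ
    rcases eq_or_lt_of_le hσ.1 with h0 | h0
    · simp [hΘdef, hgdef, ← h0]
    · have hIccsub : Icc (0:ℝ) σ ⊆ Icc 0 R := Icc_subset_Icc le_rfl hσ.2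
      have hint1 : IntervalIntegrable (fun τ => ψ τ ^ (n-1)) volume 0 σ := by
        apply ContinuousOn.intervalIntegrable
        apply hψpowcont.mono
        rw [uIcc_of_le h0.le]; exact Icc_subset_Ici_self
      have hint2 : IntervalIntegrable (fun τ => w τ * ψ τ ^ (n-1)) volume 0 σ := by
        apply ContinuousOn.intervalIntegrable
        apply (hw.continuousOn).mul
        apply hψpowcont.mono
        rw [uIcc_of_le h0.le]; exact Icc_subset_Ici_self
      have hlow : c * (∫ s in (0:ℝ)..σ, ψ s ^ (n-1)) ≤ ∫ τ in (0:ℝ)..σ, w τ * ψ τ ^ (n-1) := by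
        rw [← intervalIntegral.integral_const_mul]
        apply intervalIntegral.integral_mono_on h0.le (hint1.const_mul c) hint2
        intro x hx
        exact mul_le_mul_of_nonneg_right (hcw x (hIccsub hx)) (pow_nonneg (hψnn x hx.1) _)
      have hhigh : (∫ τ in (0:ℝ)..σ, w τ * ψ τ ^ (n-1)) ≤ C * ∫ s in (0:ℝ)..σ, ψ s ^ (n-1) := by
        rw [← intervalIntegral.integral_const_mul]
        apply intervalIntegral.integral_mono_on h0.le hint2 (hint1.const_mul C)
        intro x hx
        exact mul_le_mul_of_nonneg_right (hwC x (hIccsub hx)) (pow_nonneg (hψnn x hx.1) _)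
      have hD : (0:ℝ) < ψ σ ^ (n-1) := pow_pos (hψpos σ h0) _
      constructor
      · show c * (_ / _) ≤ _ / _
        rw [← mul_div_assoc]
        gcongr
      · show _ / _ ≤ C * (_ / _)
        rw [← mul_div_assoc]
        gcongr
  have hFwcont : ContinuousOn (fun σ => ∫ τ in (0:ℝ)..σ, w τ * ψ τ ^ (n-1)) (Icc 0 R) := by
    have : IntegrableOn (fun τ => w τ * ψ τ ^ (n-1)) (uIcc 0 R) volume := by
      rw [uIcc_of_le hR.le]
      apply ContinuousOn.integrableOn_Icc
      exact (hw.continuousOn).mul (hψpowcont.mono Icc_subset_Ici_self)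
    have h2 := intervalIntegral.continuousOn_primitive_interval (a := 0) (b := R) this
    rwa [uIcc_of_le hR.le] at h2
  have hgcont : ContinuousOn g (Ioc 0 R) := by
    apply ContinuousOn.div
    · exact hFwcont.mono Ioc_subset_Icc_self
    · exact hψpowcont.mono (fun x hx => le_of_lt hx.1)
    · intro x hx
      exact (pow_pos (hψpos x hx.1) _).ne'
  have hgint : IntervalIntegrable g volume 0 R := by
    rw [intervalIntegrable_iff_integrableOn_Ioc_of_le hR.le]
    have hbound : IntegrableOn (fun σ => C * Θ σ) (Ioc 0 R) volume :=
      (hΘint.mono_set Ioc_subset_Ioi_self).const_mul C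
    apply Integrable.mono' hbound (hgcont.aestronglyMeasurable measurableSet_Ioc)
    apply (ae_restrict_iff' measurableSet_Ioc).2
    apply ae_of_all
    intro x hx
    have hk := key x (Ioc_subset_Icc_self hx)
    have hΘnn : 0 ≤ Θ x := le_of_lt <| theta_pos n ψ hψpos hψcont x hx.1
    have hg0 : 0 ≤ g x := le_trans (mul_nonneg hc hΘnn) hk.1
    rw [Real.norm_eq_abs, abs_of_nonneg hg0]
    exact hk.2
  have hΘii : IntervalIntegrable Θ volume 0 R := theta_intInt n ψ hΘint hR.le
  constructor
  · rw [← intervalIntegral.integral_const_mul]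
    exact intervalIntegral.integral_mono_on hR.le (hΘii.const_mul c) hgint
      (fun x hx => (key x hx).1)
  · rw [← intervalIntegral.integral_const_mul]
    exact intervalIntegral.integral_mono_on hR.le hgint (hΘii.const_mul C)
      (fun x hx => (key x hx).2)


/-- Membership of `(s, 2t)` in the set `A`: on a stochastically incomplete model, if
`t > θ s^p` and `s < θ t^q`, then the solution starting from `(s, 2t)` exits the box
`(0,s) × (t,2t)` in finite time through `u = 0` (with `v ≥ t` there). -/
theorem initial_datum_in_A
    (n : ℕ) (hn : 3 ≤ n) (ψ : ℝ → ℝ)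
    (hψ0 : ψ 0 = 0) (hψ'0 : HasDerivAt ψ 1 0)
    (hψpos : ∀ r > (0:ℝ), 0 < ψ r)
    (hψcont : ContinuousOn ψ (Ici 0))
    (hΘint : IntegrableOn
      (fun r => (∫ s in (0:ℝ)..r, ψ s ^ (n-1)) / ψ r ^ (n-1)) (Ioi (0:ℝ)))
    (p q : ℝ) (hp : 0 < p) (hq : 0 < q)
    (s t : ℝ) (hs : 0 < s) (ht : 0 < t)
    (hts : t > (∫ r in Ioi (0:ℝ), (∫ σ in (0:ℝ)..r, ψ σ ^ (n-1)) / ψ r ^ (n-1)) * s ^ p)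
    (hst : s < (∫ r in Ioi (0:ℝ), (∫ σ in (0:ℝ)..r, ψ σ ^ (n-1)) / ψ r ^ (n-1)) * t ^ q)
    (u v : ℝ → ℝ)
    (hucont : Continuous u) (hvcont : Continuous v)
    (hu0 : u 0 = s) (hv0 : v 0 = 2 * t)
    -- the integral equations hold on the maximal positivity interval
    (hequ : ∀ r ≥ (0:ℝ), (∀ τ ∈ Ico (0:ℝ) r, 0 < u τ ∧ 0 < v τ) →
      u r = s - ∫ σ in (0:ℝ)..r, (∫ τ in (0:ℝ)..σ, v τ ^ q * ψ τ ^ (n-1)) / ψ σ ^ (n-1))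
    (heqv : ∀ r ≥ (0:ℝ), (∀ τ ∈ Ico (0:ℝ) r, 0 < u τ ∧ 0 < v τ) →
      v r = 2 * t - ∫ σ in (0:ℝ)..r, (∫ τ in (0:ℝ)..σ, u τ ^ p * ψ τ ^ (n-1)) / ψ σ ^ (n-1)) :
    ∃ R > (0:ℝ), u R = 0 ∧ t ≤ v R ∧
      ∀ τ ∈ Ioo (0:ℝ) R, 0 < u τ ∧ u τ < s ∧ t < v τ ∧ v τ < 2 * t := by
  have htq : (0:ℝ) < t ^ q := Real.rpow_pos_of_pos ht q
  have wvcont : Continuous (fun τ => v τ ^ q) :=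
    continuous_iff_continuousAt.mpr fun x =>
      (Real.continuousAt_rpow_const (v x) q (Or.inr hq.le)).comp hvcont.continuousAt
  have wucont : Continuous (fun τ => u τ ^ p) :=
    continuous_iff_continuousAt.mpr fun x =>
      (Real.continuousAt_rpow_const (u x) p (Or.inr hp.le)).comp hucont.continuousAt
  -- small initial interval inside a slightly larger box
  obtain ⟨ε, hε0, hεsub⟩ : ∃ ε > (0:ℝ), ∀ x ∈ Icc (0:ℝ) ε,
      s/2 < u x ∧ u x < 2*s ∧ t < v x ∧ v x < 3*t := by
    have hopen : IsOpen {x : ℝ | s/2 < u x ∧ u x < 2*s ∧ t < v x ∧ v x < 3*t} :=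
      (isOpen_lt continuous_const hucont).inter
        ((isOpen_lt hucont continuous_const).inter
          ((isOpen_lt continuous_const hvcont).inter (isOpen_lt hvcont continuous_const)))
    have h0mem : (0:ℝ) ∈ {x : ℝ | s/2 < u x ∧ u x < 2*s ∧ t < v x ∧ v x < 3*t} := by
      simp only [mem_setOf_eq, hu0, hv0]
      refine ⟨by linarith, by linarith, by linarith, by linarith⟩
    obtain ⟨δ, hδ0, hδ⟩ := Metric.isOpen_iff.1 hopen 0 h0mem
    refine ⟨δ/2, by positivity, fun x hx => hδ ?_⟩
    rw [Metric.mem_ball, Real.dist_eq, sub_zero, abs_of_nonneg hx.1]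
    linarith [hx.2]
  -- Claim 1: the strict box holds on (0, ε]
  have hclaim1 : ∀ r ∈ Ioc (0:ℝ) ε, 0 < u r ∧ u r < s ∧ t < v r ∧ v r < 2*t := by
    intro r hr
    have hrI : Icc (0:ℝ) r ⊆ Icc 0 ε := Icc_subset_Icc le_rfl hr.2
    have hpos : ∀ τ ∈ Ico (0:ℝ) r, 0 < u τ ∧ 0 < v τ := by
      intro τ hτ
      have h := hεsub τ (hrI ⟨hτ.1, hτ.2.le⟩)
      exact ⟨by linarith [h.1], by linarith [h.2.2.1]⟩
    have hequr := hequ r hr.1.le hpos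
    have heqvr := heqv r hr.1.le hpos
    have hΘpos := theta_int_pos n ψ hψpos hψcont hΘint hr.1
    have hbv := aux_bound n ψ hψ0 hψpos hψcont hΘint (fun τ => v τ ^ q) wvcont hr.1
      htq.le
      (fun τ hτ => Real.rpow_le_rpow ht.le (hεsub τ (hrI hτ)).2.2.1.le hq.le)
      (fun τ hτ => Real.rpow_le_rpow
        (le_trans ht.le (hεsub τ (hrI hτ)).2.2.1.le) (hεsub τ (hrI hτ)).2.2.2.le hq.le)
    have hbu := aux_bound n ψ hψ0 hψpos hψcont hΘint (fun τ => u τ ^ p) wucont hr.1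
      (Real.rpow_nonneg (by positivity : (0:ℝ) ≤ s/2) p)
      (fun τ hτ => Real.rpow_le_rpow (by positivity) (hεsub τ (hrI hτ)).1.le hp.le)
      (fun τ hτ => Real.rpow_le_rpow
        (le_trans (by positivity : (0:ℝ) ≤ s/2) (hεsub τ (hrI hτ)).1.le)
        (hεsub τ (hrI hτ)).2.1.le hp.le)
    have h1 : 0 < t ^ q * ∫ σ in (0:ℝ)..r, (∫ s in (0:ℝ)..σ, ψ s ^ (n-1)) / ψ σ ^ (n-1) :=
      mul_pos htq hΘpos
    have h2 : 0 < (s/2) ^ p * ∫ σ in (0:ℝ)..r, (∫ s in (0:ℝ)..σ, ψ s ^ (n-1)) / ψ σ ^ (n-1) :=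
      mul_pos (Real.rpow_pos_of_pos (by positivity) p) hΘpos
    have hmem := hεsub r (hrI ⟨hr.1.le, le_rfl⟩)
    refine ⟨by linarith [hmem.1], by rw [hequr]; linarith [hbv.1],
      hmem.2.2.1, by rw [heqvr]; linarith [hbu.1]⟩
  -- the set S
  set S : Set ℝ := {r | 0 < r ∧ ∀ τ ∈ Ioo (0:ℝ) r, 0 < u τ ∧ u τ < s ∧ t < v τ ∧ v τ < 2*t}
    with hSdef
  have hεS : ε ∈ S := ⟨hε0, fun τ hτ => hclaim1 τ ⟨hτ.1, hτ.2.le⟩⟩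
  -- the box cannot hold on all of (0,∞)
  have hnotall : ¬ (∀ τ : ℝ, 0 < τ → 0 < u τ ∧ u τ < s ∧ t < v τ ∧ v τ < 2*t) := by
    intro hall
    have hθ : s / t ^ q < ∫ r in Ioi (0:ℝ), (∫ σ in (0:ℝ)..r, ψ σ ^ (n-1)) / ψ r ^ (n-1) :=
      (div_lt_iff₀ htq).2 (by linarith [hst])
    have htend := intervalIntegral_tendsto_integral_Ioi 0 hΘint (tendsto_id (α := ℝ))
    have hev : ∀ᶠ r in atTop,
        s / t ^ q < ∫ σ in (0:ℝ)..r, (∫ s in (0:ℝ)..σ, ψ s ^ (n-1)) / ψ σ ^ (n-1) :=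
      htend.eventually (eventually_gt_nhds hθ)
    obtain ⟨r, hrθ, hr0⟩ := (hev.and (eventually_gt_atTop 0)).exists
    have hIccb : ∀ τ ∈ Icc (0:ℝ) r, t ≤ v τ ∧ v τ ≤ 2*t := by
      intro τ hτ
      rcases eq_or_lt_of_le hτ.1 with h | h
      · rw [← h, hv0]; constructor <;> linarith
      · exact ⟨(hall τ h).2.2.1.le, (hall τ h).2.2.2.le⟩
    have hpos : ∀ τ ∈ Ico (0:ℝ) r, 0 < u τ ∧ 0 < v τ := by
      intro τ hτ
      rcases eq_or_lt_of_le hτ.1 with h | h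
      · rw [← h, hu0, hv0]; exact ⟨hs, by linarith⟩
      · exact ⟨(hall τ h).1, by linarith [(hall τ h).2.2.1]⟩
    have hequr := hequ r hr0.le hpos
    have hbv := aux_bound n ψ hψ0 hψpos hψcont hΘint (fun τ => v τ ^ q) wvcont hr0
      htq.le
      (fun τ hτ => Real.rpow_le_rpow ht.le (hIccb τ hτ).1 hq.le)
      (fun τ hτ => Real.rpow_le_rpow (le_trans ht.le (hIccb τ hτ).1) (hIccb τ hτ).2 hq.le)
    have hrθ' : s < (∫ σ in (0:ℝ)..r, (∫ s in (0:ℝ)..σ, ψ s ^ (n-1)) / ψ σ ^ (n-1)) * t ^ q :=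
      (div_lt_iff₀ htq).1 hrθ
    have hcomm : (∫ σ in (0:ℝ)..r, (∫ s in (0:ℝ)..σ, ψ s ^ (n-1)) / ψ σ ^ (n-1)) * t ^ q
        = t ^ q * ∫ σ in (0:ℝ)..r, (∫ s in (0:ℝ)..σ, ψ s ^ (n-1)) / ψ σ ^ (n-1) := mul_comm _ _
    have h3 := (hall r hr0).1
    rw [hequr] at h3
    linarith [hbv.1]
  have hSbdd : BddAbove S := by
    by_contra hb
    apply hnotall
    intro τ hτ
    obtain ⟨r, hrS, hτr⟩ := not_bddAbove_iff.1 hb τ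
    exact hrS.2 τ ⟨hτ, hτr⟩
  set R := sSup S with hRdef
  have hεR : ε ≤ R := le_csSup hSbdd hεS
  have hR0 : 0 < R := lt_of_lt_of_le hε0 hεR
  have hboxIoo : ∀ τ ∈ Ioo (0:ℝ) R, 0 < u τ ∧ u τ < s ∧ t < v τ ∧ v τ < 2*t := by
    intro τ hτ
    obtain ⟨r, hrS, h⟩ := exists_lt_of_lt_csSup ⟨ε, hεS⟩ hτ.2
    exact hrS.2 τ ⟨hτ.1, h⟩
  have hIccR : ∀ τ ∈ Icc (0:ℝ) R, 0 ≤ u τ ∧ u τ ≤ s ∧ t ≤ v τ ∧ v τ ≤ 2*t := by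
    have hclosed : IsClosed {x : ℝ | 0 ≤ u x ∧ u x ≤ s ∧ t ≤ v x ∧ v x ≤ 2*t} :=
      (isClosed_le continuous_const hucont).inter
        ((isClosed_le hucont continuous_const).inter
          ((isClosed_le continuous_const hvcont).inter (isClosed_le hvcont continuous_const)))
    have hsub : Ioo (0:ℝ) R ⊆ {x : ℝ | 0 ≤ u x ∧ u x ≤ s ∧ t ≤ v x ∧ v x ≤ 2*t} := by
      intro x hx
      obtain ⟨a, b, c, d⟩ := hboxIoo x hx
      exact ⟨a.le, b.le, c.le, d.le⟩
    have h2 : Icc (0:ℝ) R ⊆ {x : ℝ | 0 ≤ u x ∧ u x ≤ s ∧ t ≤ v x ∧ v x ≤ 2*t} := by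
      rw [← closure_Ioo hR0.ne]
      exact hclosed.closure_subset_iff.2 hsub
    exact fun τ hτ => h2 hτ
  have hposR : ∀ τ ∈ Ico (0:ℝ) R, 0 < u τ ∧ 0 < v τ := by
    intro τ hτ
    rcases eq_or_lt_of_le hτ.1 with h | h
    · rw [← h, hu0, hv0]; exact ⟨hs, by linarith⟩
    · exact ⟨(hboxIoo τ ⟨h, hτ.2⟩).1, by linarith [(hboxIoo τ ⟨h, hτ.2⟩).2.2.1]⟩
  have hequR := hequ R hR0.le hposR
  have heqvR := heqv R hR0.le hposR
  have hΘRpos := theta_int_pos n ψ hψpos hψcont hΘint hR0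
  have hΘRle := theta_int_le n ψ hψpos hψcont hΘint hR0.le
  have huR : u R = 0 := by
    by_contra hne
    have huRpos : 0 < u R := lt_of_le_of_ne (hIccR R ⟨hR0.le, le_rfl⟩).1 (Ne.symm hne)
    -- t < v R
    have hbu := aux_bound n ψ hψ0 hψpos hψcont hΘint (fun τ => u τ ^ p) wucont hR0
      (le_refl (0:ℝ))
      (fun τ hτ => Real.rpow_nonneg (hIccR τ hτ).1 p)
      (fun τ hτ => Real.rpow_le_rpow (hIccR τ hτ).1 (hIccR τ hτ).2.1 hp.le)
    have hsp : (0:ℝ) ≤ s ^ p := Real.rpow_nonneg hs.le p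
    have hJle : s ^ p * (∫ σ in (0:ℝ)..R, (∫ s in (0:ℝ)..σ, ψ s ^ (n-1)) / ψ σ ^ (n-1))
        ≤ s ^ p * ∫ r in Ioi (0:ℝ), (∫ σ in (0:ℝ)..r, ψ σ ^ (n-1)) / ψ r ^ (n-1) :=
      mul_le_mul_of_nonneg_left hΘRle hsp
    have hcomm : s ^ p * (∫ r in Ioi (0:ℝ), (∫ σ in (0:ℝ)..r, ψ σ ^ (n-1)) / ψ r ^ (n-1))
        = (∫ r in Ioi (0:ℝ), (∫ σ in (0:ℝ)..r, ψ σ ^ (n-1)) / ψ r ^ (n-1)) * s ^ p :=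
      mul_comm _ _
    have hvRt : t < v R := by rw [heqvR]; linarith [hbu.2]
    -- u R < s
    have hbv := aux_bound n ψ hψ0 hψpos hψcont hΘint (fun τ => v τ ^ q) wvcont hR0
      htq.le
      (fun τ hτ => Real.rpow_le_rpow ht.le (hIccR τ hτ).2.2.1 hq.le)
      (fun τ hτ => Real.rpow_le_rpow (le_trans ht.le (hIccR τ hτ).2.2.1)
        (hIccR τ hτ).2.2.2 hq.le)
    have huRs : u R < s := by
      rw [hequR]
      have := mul_pos htq hΘRpos
      linarith [hbv.1]
    -- v R < 2t, via a positive minimum of u on [0,R]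
    obtain ⟨x₀, hx₀mem, hx₀min⟩ :=
      isCompact_Icc.exists_isMinOn (nonempty_Icc.2 hR0.le) hucont.continuousOn
    have hux₀ : 0 < u x₀ := by
      rcases eq_or_lt_of_le hx₀mem.1 with h | h
      · rw [← h, hu0]; exact hs
      · rcases eq_or_lt_of_le hx₀mem.2 with h2 | h2
        · rw [h2]; exact huRpos
        · exact (hboxIoo x₀ ⟨h, h2⟩).1
    have hbu2 := aux_bound n ψ hψ0 hψpos hψcont hΘint (fun τ => u τ ^ p) wucont hR0
      (Real.rpow_nonneg hux₀.le p)
      (fun τ hτ => Real.rpow_le_rpow hux₀.le (isMinOn_iff.1 hx₀min τ hτ) hp.le)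
      (fun τ hτ => Real.rpow_le_rpow (hIccR τ hτ).1 (hIccR τ hτ).2.1 hp.le)
    have hvR2t : v R < 2*t := by
      rw [heqvR]
      have := mul_pos (Real.rpow_pos_of_pos hux₀ p) hΘRpos
      linarith [hbu2.1]
    -- extend beyond R, contradiction with sSup
    have hopen2 : IsOpen {x : ℝ | 0 < u x ∧ u x < s ∧ t < v x ∧ v x < 2*t} :=
      (isOpen_lt continuous_const hucont).inter
        ((isOpen_lt hucont continuous_const).inter
          ((isOpen_lt continuous_const hvcont).inter (isOpen_lt hvcont continuous_const)))
    obtain ⟨δ, hδ0, hδ⟩ := Metric.isOpen_iff.1 hopen2 R ⟨huRpos, huRs, hvRt, hvR2t⟩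
    have hmemS : R + δ/2 ∈ S := by
      refine ⟨by linarith, fun τ hτ => ?_⟩
      by_cases hcase : τ < R
      · exact hboxIoo τ ⟨hτ.1, hcase⟩
      · push_neg at hcase
        apply hδ
        rw [Metric.mem_ball, Real.dist_eq, abs_of_nonneg (by linarith)]
        linarith [hτ.2]
    have := le_csSup hSbdd hmemS
    rw [← hRdef] at this
    linarith
  exact ⟨R, hR0, huR, (hIccR R ⟨hR0.le, le_rfl⟩).2.2.1, hboxIoo⟩
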